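/- (Gronwall-type comparison, Pachpatte) Let f, g, h : [0,T] → ℝ be continuous, k : [0,T] × ℝ → ℝ measurable, non-decreasing in the second variable, and satisfying k(t, ȳ) − k(t, y) ≤ a(t)(ȳ − y) for all y ≤ ȳ, with a : [0,T] → ℝ integrable. If f(t) ≤ h(t) + ∫₀ᵗ k(s, f(s)) ds and g(t) ≥ h(t) + ∫₀ᵗ k(s, g(s)) ds for all t ∈ [0,T], then f(t) ≤ g(t) for all t ∈ [0,T]. -/
import Mathlib


open MeasureTheory intervalIntegral

/-- Pachpatte's Gronwall-type comparison: with `f, g, h` continuous on `[0,T]`,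
`k` measurable, non-decreasing in its second argument and one-sidedly Lipschitz with
integrable coefficient `a`, if `f` is a subsolution and `g` a supersolution of the integral
inequality with forcing `h`, then `f ≤ g` on `[0,T]`. -/
theorem stmt3 (T : ℝ) (hT : 0 ≤ T) (f g h : ℝ → ℝ)
    (hf : ContinuousOn f (Set.Icc 0 T)) (hg : ContinuousOn g (Set.Icc 0 T))
    (hh : ContinuousOn h (Set.Icc 0 T))
    (k : ℝ → ℝ → ℝ) (hk : Measurable (Function.uncurry k))
    (hkmono : ∀ t ∈ Set.Icc (0 : ℝ) T, Monotone (k t))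
    (a : ℝ → ℝ) (ha : IntegrableOn a (Set.Icc 0 T))
    (hklip : ∀ t ∈ Set.Icc (0 : ℝ) T, ∀ y ybar : ℝ, y ≤ ybar →
      k t ybar - k t y ≤ a t * (ybar - y))
    (hkfint : IntervalIntegrable (fun s => k s (f s)) volume 0 T)
    (hkgint : IntervalIntegrable (fun s => k s (g s)) volume 0 T)
    (hfsub : ∀ t ∈ Set.Icc (0 : ℝ) T, f t ≤ h t + ∫ s in (0 : ℝ)..t, k s (f s))
    (hgsup : ∀ t ∈ Set.Icc (0 : ℝ) T, g t ≥ h t + ∫ s in (0 : ℝ)..t, k s (g s)) :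
    ∀ t ∈ Set.Icc (0 : ℝ) T, f t ≤ g t := by
  classical
  set ψ : ℝ → ℝ := fun s => max (f s - g s) 0 with hψdef
  have hψnonneg : ∀ s, 0 ≤ ψ s := fun s => le_max_right _ _
  have hψc : ContinuousOn ψ (Set.Icc 0 T) :=
    ((hf.sub hg).sup continuousOn_const)
  -- bound for ψ on the compact interval
  obtain ⟨M, hM⟩ : ∃ M, ∀ s ∈ Set.Icc (0 : ℝ) T, ‖ψ s‖ ≤ M :=
    (isCompact_Icc).exists_bound_of_continuousOn hψc
  set b : ℝ → ℝ := fun s => |a s| * ψ s with hbdef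
  have hbnonneg : ∀ s, 0 ≤ b s := fun s =>
    mul_nonneg (abs_nonneg _) (hψnonneg s)
  -- integrability of b on [0,T]
  have haOn : IntegrableOn (fun s => ‖a s‖) (Set.Icc 0 T) volume := ha.norm
  have hb_meas : AEStronglyMeasurable b (volume.restrict (Set.Icc 0 T)) := by
    exact (ha.aestronglyMeasurable.norm).mul (hψc.aestronglyMeasurable measurableSet_Icc)
  have hb_int : IntegrableOn b (Set.Icc 0 T) := by
    refine Integrable.mono (haOn.const_mul M) hb_meas ?_
    filter_upwards [ae_restrict_mem measurableSet_Icc] with s hs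
    have h1 : ψ s ≤ M := (le_trans (le_abs_self _) (hM s hs))
    have h2 : ‖b s‖ = |a s| * ψ s := by
      rw [Real.norm_eq_abs, abs_of_nonneg (hbnonneg s)]
    rw [h2]
    have h3 : |a s| * ψ s ≤ |a s| * M :=
      mul_le_mul_of_nonneg_left h1 (abs_nonneg _)
    have h4 : M * ‖a s‖ ≤ ‖M * ‖a s‖‖ := le_abs_self _
    rw [Real.norm_eq_abs (a s)] at h4
    calc |a s| * ψ s ≤ |a s| * M := h3
      _ = M * |a s| := mul_comm _ _
      _ ≤ ‖M * ‖a s‖‖ := h4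
  have hsubset : ∀ c d : ℝ, c ∈ Set.Icc (0:ℝ) T → d ∈ Set.Icc (0:ℝ) T →
      Set.uIcc c d ⊆ Set.Icc 0 T := by
    intro c d hc hd
    exact Set.uIcc_subset_Icc hc hd
  have hb_ii : ∀ c d : ℝ, c ∈ Set.Icc (0:ℝ) T → d ∈ Set.Icc (0:ℝ) T →
      IntervalIntegrable b volume c d := by
    intro c d hc hd
    exact (hb_int.mono_set (hsubset c d hc hd)).intervalIntegrable
  have ha_ii : ∀ c d : ℝ, c ∈ Set.Icc (0:ℝ) T → d ∈ Set.Icc (0:ℝ) T →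
      IntervalIntegrable (fun s => |a s|) volume c d := by
    intro c d hc hd
    exact (haOn.mono_set (hsubset c d hc hd)).intervalIntegrable
  have h0mem : (0:ℝ) ∈ Set.Icc (0:ℝ) T := ⟨le_refl _, hT⟩
  set w : ℝ → ℝ := fun t => ∫ s in (0:ℝ)..t, b s with hwdef
  have hw0 : w 0 = 0 := integral_same
  have huIcc : Set.uIcc (0:ℝ) T = Set.Icc 0 T := Set.uIcc_of_le hT
  have hwcont : ContinuousOn w (Set.Icc 0 T) := by
    rw [← huIcc]
    exact continuousOn_primitive_interval (by rwa [huIcc])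
  -- w is monotone on [0,T]
  have hwadd : ∀ c d : ℝ, c ∈ Set.Icc (0:ℝ) T → d ∈ Set.Icc (0:ℝ) T →
      w d = w c + ∫ s in c..d, b s := by
    intro c d hc hd
    have := integral_add_adjacent_intervals (hb_ii 0 c h0mem hc) (hb_ii c d hc hd)
    rw [hwdef]
    simp only
    rw [← this]
  have hwmono : ∀ c d : ℝ, c ∈ Set.Icc (0:ℝ) T → d ∈ Set.Icc (0:ℝ) T → c ≤ d →
      w c ≤ w d := by
    intro c d hc hd hcd
    rw [hwadd c d hc hd]
    have : 0 ≤ ∫ s in c..d, b s :=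
      intervalIntegral.integral_nonneg hcd (fun u _ => hbnonneg u)
    linarith
  have hwnonneg : ∀ t ∈ Set.Icc (0:ℝ) T, 0 ≤ w t := by
    intro t ht
    have := hwmono 0 t h0mem ht ht.1
    rwa [hw0] at this
  -- pointwise comparison of integrands
  have hpt : ∀ s ∈ Set.Icc (0:ℝ) T, k s (f s) - k s (g s) ≤ b s := by
    intro s hs
    rcases le_total (f s) (g s) with hle | hle
    · have h1 : k s (f s) ≤ k s (g s) := hkmono s hs hle
      have h2 : 0 ≤ b s := hbnonneg s
      linarith
    · have h1 : k s (f s) - k s (g s) ≤ a s * (f s - g s) :=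
        hklip s hs (g s) (f s) hle
      have h2 : a s * (f s - g s) ≤ |a s| * (f s - g s) :=
        mul_le_mul_of_nonneg_right (le_abs_self _) (by linarith)
      have h3 : ψ s = f s - g s := max_eq_left (by linarith)
      rw [hbdef]
      simp only
      rw [h3]
      linarith
  -- key estimate : f - g ≤ w on [0,T]
  have key : ∀ t ∈ Set.Icc (0:ℝ) T, f t - g t ≤ w t := by
    intro t ht
    have hsub : Set.uIcc (0:ℝ) t ⊆ Set.uIcc (0:ℝ) T := by
      rw [huIcc]; exact hsubset 0 t h0mem ht
    have hif : IntervalIntegrable (fun s => k s (f s)) volume 0 t :=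
      hkfint.mono_set hsub
    have hig : IntervalIntegrable (fun s => k s (g s)) volume 0 t :=
      hkgint.mono_set hsub
    have h1 : f t - g t ≤ ∫ s in (0:ℝ)..t, (k s (f s) - k s (g s)) := by
      rw [intervalIntegral.integral_sub hif hig]
      have := hfsub t ht
      have := hgsup t ht
      linarith
    have h2 : (∫ s in (0:ℝ)..t, (k s (f s) - k s (g s))) ≤ w t := by
      refine intervalIntegral.integral_mono_on ht.1 (hif.sub hig)
        (hb_ii 0 t h0mem ht) ?_
      intro s hs
      exact hpt s ⟨hs.1, le_trans hs.2 ht.2⟩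
    linarith
  have hψw : ∀ t ∈ Set.Icc (0:ℝ) T, ψ t ≤ w t := by
    intro t ht
    exact max_le (key t ht) (hwnonneg t ht)
  -- the set where w vanishes
  set S : Set ℝ := Set.Icc 0 T ∩ w ⁻¹' (Set.Iic 0) with hSdef
  have hS0 : (0:ℝ) ∈ S := ⟨h0mem, by simp [hw0]⟩
  have hSne : S.Nonempty := ⟨0, hS0⟩
  have hSbdd : BddAbove S := ⟨T, fun x hx => hx.1.2⟩
  have hSclosed : IsClosed S :=
    hwcont.preimage_isClosed_of_isClosed isClosed_Icc isClosed_Iic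
  set c : ℝ := sSup S with hcdef
  have hcS : c ∈ S := hSclosed.csSup_mem hSne hSbdd
  have hcT : c ≤ T := csSup_le hSne (fun x hx => hx.1.2)
  -- main claim: c = T
  have hcmain : c = T := by
    by_contra hne
    have hclt : c < T := lt_of_le_of_ne hcT hne
    -- primitive of |a|
    set A : ℝ → ℝ := fun t => ∫ s in (0:ℝ)..t, |a s| with hAdef
    have hAcont : ContinuousOn A (Set.Icc 0 T) := by
      rw [← huIcc]
      exact continuousOn_primitive_interval (by rw [huIcc]; exact haOn)
    have hAc : ContinuousWithinAt A (Set.Icc 0 T) c := hAcont c hcS.1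
    -- find d ∈ Ioc c T with A d - A c < 1
    have hev : ∀ᶠ d in nhdsWithin c (Set.Ioc c T), A d - A c < 1 := by
      have h1 : Filter.Tendsto A (nhdsWithin c (Set.Ioc c T)) (nhds (A c)) :=
        hAc.mono_left (nhdsWithin_mono c (fun x hx =>
          ⟨le_trans hcS.1.1 hx.1.le, hx.2⟩))
      have h2 := h1.eventually (eventually_lt_nhds (show A c < A c + 1 by linarith))
      filter_upwards [h2] with d hd
      linarith
    have hne' : (nhdsWithin c (Set.Ioc c T)).NeBot := by
      rw [nhdsWithin_Ioc_eq_nhdsGT hclt]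
      infer_instance
    obtain ⟨d, hd1, hdIoc⟩ :=
      (hev.and self_mem_nhdsWithin).exists
    have hdmem : d ∈ Set.Icc (0:ℝ) T := ⟨le_trans hcS.1.1 hdIoc.1.le, hdIoc.2⟩
    -- show w d ≤ 0
    have hwd : w d ≤ 0 := by
      by_contra hpos
      push_neg at hpos
      have hwadd' : w d = w c + ∫ s in c..d, b s := hwadd c d hcS.1 hdmem
      have hmono' : (∫ s in c..d, b s) ≤ ∫ s in c..d, |a s| * w d := by
        refine intervalIntegral.integral_mono_on hdIoc.1.le
          (hb_ii c d hcS.1 hdmem) ((ha_ii c d hcS.1 hdmem).mul_const _) ?_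
        intro s hs
        have hsmem : s ∈ Set.Icc (0:ℝ) T :=
          ⟨le_trans hcS.1.1 hs.1, le_trans hs.2 hdIoc.2⟩
        have h1 : ψ s ≤ w s := hψw s hsmem
        have h2 : w s ≤ w d := hwmono s d hsmem hdmem hs.2
        exact mul_le_mul_of_nonneg_left (le_trans h1 h2) (abs_nonneg _)
      have hAeq : A d - A c = ∫ s in c..d, |a s| := by
        have := integral_add_adjacent_intervals (ha_ii 0 c h0mem hcS.1)
          (ha_ii c d hcS.1 hdmem)
        rw [hAdef]
        simp only
        linarith [this]
      have hIc : (∫ s in c..d, |a s| * w d) = (A d - A c) * w d := by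
        rw [intervalIntegral.integral_mul_const, hAeq]
      have hwc : w c ≤ 0 := hcS.2
      have hAnn : 0 ≤ A d - A c := by
        rw [hAeq]
        exact intervalIntegral.integral_nonneg hdIoc.1.le (fun u _ => abs_nonneg _)
      nlinarith [hd1, hwadd', hmono', hIc, hwc, hAnn, hpos]
    have : d ≤ c := le_csSup hSbdd ⟨hdmem, hwd⟩
    exact absurd hdIoc.1 (not_lt.mpr this)
  -- conclude
  intro t ht
  have hwt : w t ≤ 0 := by
    have h1 : w t ≤ w T := hwmono t T ht ⟨hT, le_refl T⟩ ht.2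
    have h2 : w T ≤ 0 := by rw [← hcmain]; exact hcS.2
    linarith
  have := key t ht
  linarith
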